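/- As x → 0 with x ∈ ℝ² ∖ ℤ², the function λ(x) + 4·log|x| converges, and lim_{x→0} (λ(x) + 4·log|x|) = −4·log(2π) + 2π/3 − 8·Σ_{n=1}^∞ log(1 − e^{−2πn}); that is, the Green function of the flat unit torus has the expansion G(P,Q) = −4 log r + A_P + O(r²) near its singularity with regular value A_P = −4 log(2π) + 2π/3 − 8Σ_{n=1}^∞ log(1 − e^{−2πn}). -/

import Mathlib

open Real

/-- The Green function `λ` of the Laplacian on the flat unit torus `ℝ²/ℤ²`, viewed as a
function on `ℝ²` (well defined away from the lattice `ℤ²`). -/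
noncomputable def lam (x : ℝ × ℝ) : ℝ :=
  4 * π * (x.2 ^ 2 - x.2 + 1 / 6)
    - 2 * Real.log (1 + Real.exp (-4 * π * x.2) -
        2 * Real.exp (-2 * π * x.2) * Real.cos (2 * π * x.1))
    - 2 * ∑' n : ℕ, Real.log (1 + Real.exp (-4 * π * (n + 1) - 4 * π * x.2) -
        2 * Real.exp (-2 * π * (n + 1) - 2 * π * x.2) * Real.cos (2 * π * x.1))
    - 2 * ∑' n : ℕ, Real.log (1 + Real.exp (-4 * π * (n + 1) + 4 * π * x.2) -
        2 * Real.exp (-2 * π * (n + 1) + 2 * π * x.2) * Real.cos (2 * π * x.1))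

lemma sq_exp (a : ℝ) : Real.exp (2 * a) = Real.exp a ^ 2 := by
  rw [sq, ← Real.exp_add]; ring_nf

lemma log_term_bound {r θ : ℝ} (h0 : 0 < r) (h1 : r < 1) :
    |Real.log (1 + r ^ 2 - 2 * r * Real.cos θ)| ≤ -2 * Real.log (1 - r) := by
  have hc1 := Real.cos_le_one θ
  have hc2 := Real.neg_one_le_cos θ
  have hr : (0:ℝ) < 1 - r := by linarith
  have hl : (1 - r) ^ 2 ≤ 1 + r ^ 2 - 2 * r * Real.cos θ := by nlinarith
  have hu : 1 + r ^ 2 - 2 * r * Real.cos θ ≤ (1 + r) ^ 2 := by nlinarith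
  have hp : (0:ℝ) < (1 - r) ^ 2 := pow_pos hr 2
  have h2 : Real.log ((1 - r) ^ 2) ≤ Real.log (1 + r ^ 2 - 2 * r * Real.cos θ) :=
    Real.log_le_log hp hl
  have h3 : Real.log (1 + r ^ 2 - 2 * r * Real.cos θ) ≤ Real.log ((1 + r) ^ 2) :=
    Real.log_le_log (lt_of_lt_of_le hp hl) hu
  rw [Real.log_pow] at h2 h3
  push_cast at h2 h3
  have h4 : Real.log (1 + r) + Real.log (1 - r) ≤ 0 := by
    rw [← Real.log_mul (by linarith) (by linarith)]
    exact Real.log_nonpos (by nlinarith) (by nlinarith)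
  rw [abs_le]; constructor <;> linarith

lemma neg_log_le {u : ℝ} (h0 : 0 < u) (h1 : u ≤ 1/2) : -Real.log (1 - u) ≤ 2 * u := by
  have h2 : (0:ℝ) < 1 - u := by linarith
  have h3 := Real.log_le_sub_one_of_pos (inv_pos.mpr h2)
  rw [Real.log_inv] at h3
  have h4 : (1 - u)⁻¹ ≤ 1 + 2 * u := by
    rw [inv_eq_one_div, div_le_iff₀ h2]; nlinarith
  linarith

lemma bound_summable : Summable (fun n : ℕ => -2 * Real.log (1 - Real.exp (-π * (2 * n + 1)))) := by
  have hgeo : Summable (fun n : ℕ => 4 * Real.exp (-π * (2 * n + 1))) := by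
    have he : (fun n : ℕ => 4 * Real.exp (-π * (2 * n + 1)))
        = fun n : ℕ => (4 * Real.exp (-π)) * Real.exp (-2 * π) ^ n := by
      funext n
      rw [show -π * (2 * (n:ℝ) + 1) = -π + (n:ℝ) * (-2 * π) by ring, Real.exp_add,
        Real.exp_nat_mul]
      ring
    rw [he]
    exact (summable_geometric_of_lt_one (Real.exp_pos _).le
      (Real.exp_lt_one_iff.mpr (by nlinarith [Real.pi_pos]))).mul_left _
  refine Summable.of_nonneg_of_le (fun n => ?_) (fun n => ?_) hgeo
  · have hu1 : Real.exp (-π * (2 * n + 1)) < 1 :=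
      Real.exp_lt_one_iff.mpr (by nlinarith [Real.pi_pos, (Nat.cast_nonneg n : (0:ℝ) ≤ n)])
    have := Real.log_nonpos (by linarith [Real.exp_pos (-π * (2 * (n:ℝ) + 1))])
      (by linarith [Real.exp_pos (-π * (2 * (n:ℝ) + 1))] : 1 - Real.exp (-π * (2 * (n:ℝ) + 1)) ≤ 1)
    linarith
  · have hu2 : Real.exp (-π * (2 * n + 1)) ≤ 1/2 := by
      have h1 : -π * (2 * (n:ℝ) + 1) ≤ -1 := by
        nlinarith [Real.pi_gt_three, (Nat.cast_nonneg n : (0:ℝ) ≤ n)]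
      calc Real.exp (-π * (2 * n + 1)) ≤ Real.exp (-1) := Real.exp_le_exp.mpr h1
        _ ≤ 1/2 := by
          rw [Real.exp_neg]
          rw [show (1:ℝ)/2 = 2⁻¹ by norm_num]
          exact inv_anti₀ (by norm_num) (by nlinarith [Real.exp_one_gt_d9])
    have := neg_log_le (Real.exp_pos _) hu2
    linarith

lemma tsum_part_tendsto (s : ℝ) (hs : s = 1 ∨ s = -1) :
    Filter.Tendsto (fun x : ℝ × ℝ => ∑' n : ℕ, Real.log (1 +
        Real.exp (-4 * π * (n + 1) + s * (4 * π * x.2)) -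
        2 * Real.exp (-2 * π * (n + 1) + s * (2 * π * x.2)) * Real.cos (2 * π * x.1)))
      (nhds 0)
      (nhds (2 * ∑' n : ℕ, Real.log (1 - Real.exp (-2 * π * (n + 1))))) := by
  have hgsum : (2 : ℝ) * ∑' n : ℕ, Real.log (1 - Real.exp (-2 * π * (n + 1)))
      = ∑' n : ℕ, Real.log ((1 - Real.exp (-2 * π * ((n:ℝ) + 1))) ^ 2) := by
    rw [← tsum_mul_left]
    exact tsum_congr fun n => by rw [Real.log_pow]; push_cast; ring
  rw [hgsum]
  apply tendsto_tsum_of_dominated_convergence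
    (bound := fun n : ℕ => -2 * Real.log (1 - Real.exp (-π * (2 * n + 1)))) bound_summable
  · intro n
    have hcont : Continuous (fun x : ℝ × ℝ => 1 + Real.exp (-4 * π * ((n:ℝ) + 1) + s * (4 * π * x.2)) -
        2 * Real.exp (-2 * π * ((n:ℝ) + 1) + s * (2 * π * x.2)) * Real.cos (2 * π * x.1)) := by
      fun_prop
    have he : Real.exp (-2 * π * ((n:ℝ) + 1)) < 1 :=
      Real.exp_lt_one_iff.mpr (by nlinarith [Real.pi_pos, (Nat.cast_nonneg n : (0:ℝ) ≤ n)])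
    have hval0 : (1:ℝ) + Real.exp (-4 * π * ((n:ℝ) + 1) + s * (4 * π * (0:ℝ×ℝ).2)) -
        2 * Real.exp (-2 * π * ((n:ℝ) + 1) + s * (2 * π * (0:ℝ×ℝ).2)) * Real.cos (2 * π * (0:ℝ×ℝ).1)
        = (1 - Real.exp (-2 * π * ((n:ℝ) + 1))) ^ 2 := by
      simp only [Prod.snd_zero, Prod.fst_zero, mul_zero, add_zero, Real.cos_zero]
      rw [show -4 * π * ((n:ℝ) + 1) = 2 * (-2 * π * ((n:ℝ) + 1)) by ring, sq_exp]
      ring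
    have hne : (1:ℝ) + Real.exp (-4 * π * ((n:ℝ) + 1) + s * (4 * π * (0:ℝ×ℝ).2)) -
        2 * Real.exp (-2 * π * ((n:ℝ) + 1) + s * (2 * π * (0:ℝ×ℝ).2)) * Real.cos (2 * π * (0:ℝ×ℝ).1) ≠ 0 := by
      rw [hval0]; exact pow_ne_zero 2 (sub_pos.mpr he).ne'
    have h := ((hcont.continuousAt (x := (0:ℝ×ℝ))).log hne).tendsto
    rw [hval0] at h
    exact h
  · have hev : ∀ᶠ x : ℝ × ℝ in nhds 0, |x.2| < 1/2 :=
      (isOpen_lt (continuous_snd.abs) continuous_const).mem_nhds (by norm_num)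
    filter_upwards [hev] with x hx
    intro n
    have hs2 : s * (2 * π * x.2) ≤ π := by
      obtain ⟨ha, hb⟩ := abs_lt.mp hx
      rcases hs with rfl | rfl <;> nlinarith [Real.pi_pos]
    have hrw : Real.exp (-4 * π * ((n:ℝ) + 1) + s * (4 * π * x.2))
        = Real.exp (-2 * π * ((n:ℝ) + 1) + s * (2 * π * x.2)) ^ 2 := by
      rw [← sq_exp]; congr 1; ring
    rw [Real.norm_eq_abs, hrw]
    set r := Real.exp (-2 * π * ((n:ℝ) + 1) + s * (2 * π * x.2)) with hr
    have hRlt : Real.exp (-π * (2 * (n:ℝ) + 1)) < 1 :=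
      Real.exp_lt_one_iff.mpr (by nlinarith [Real.pi_pos, (Nat.cast_nonneg n : (0:ℝ) ≤ n)])
    have hrR : r ≤ Real.exp (-π * (2 * (n:ℝ) + 1)) := by
      apply Real.exp_le_exp.mpr
      nlinarith [Real.pi_pos, (Nat.cast_nonneg n : (0:ℝ) ≤ n)]
    have h1 : r < 1 := lt_of_le_of_lt hrR hRlt
    calc |Real.log (1 + r ^ 2 - 2 * r * Real.cos (2 * π * x.1))| ≤ -2 * Real.log (1 - r) :=
          log_term_bound (Real.exp_pos _) h1
      _ ≤ -2 * Real.log (1 - Real.exp (-π * (2 * n + 1))) := by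
          have := Real.log_le_log (by linarith : (0:ℝ) < 1 - Real.exp (-π * (2 * (n:ℝ) + 1)))
            (by linarith : 1 - Real.exp (-π * (2 * (n:ℝ) + 1)) ≤ 1 - r)
          linarith

lemma abs_sq_eq (x : ℝ × ℝ) :
    ‖1 - Complex.exp (-(2*(π:ℂ)) * ((x.2 : ℂ) - x.1 * Complex.I))‖ ^ 2
      = 1 + Real.exp (-4 * π * x.2) - 2 * Real.exp (-2 * π * x.2) * Real.cos (2 * π * x.1) := by
  have hre : ((-(2*(π:ℂ))) * ((x.2:ℂ) - x.1 * Complex.I)).re = -2 * π * x.2 := by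
    simp [Complex.mul_re]
  have him : ((-(2*(π:ℂ))) * ((x.2:ℂ) - x.1 * Complex.I)).im = 2 * π * x.1 := by
    simp [Complex.mul_im]
  rw [Complex.sq_norm, Complex.normSq_apply, Complex.sub_re, Complex.sub_im,
    Complex.exp_re, Complex.exp_im, hre, him]
  simp only [Complex.one_re, Complex.one_im]
  have hpyth := Real.sin_sq_add_cos_sq (2 * π * x.1)
  rw [show -4 * π * x.2 = 2 * (-2 * π * x.2) by ring, sq_exp]
  nlinarith [hpyth]

lemma middle_tendsto :
    Filter.Tendsto (fun x : ℝ × ℝ => 4 * Real.log (Real.sqrt (x.1 ^ 2 + x.2 ^ 2)) -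
        2 * Real.log (1 + Real.exp (-4 * π * x.2) -
          2 * Real.exp (-2 * π * x.2) * Real.cos (2 * π * x.1)))
      (nhdsWithin (0 : ℝ × ℝ) {x : ℝ × ℝ | ¬ ∃ m k : ℤ, x.1 = (m : ℝ) ∧ x.2 = (k : ℝ)})
      (nhds (-4 * Real.log (2 * π))) := by
  set S : Set (ℝ × ℝ) := {x : ℝ × ℝ | ¬ ∃ m k : ℤ, x.1 = (m : ℝ) ∧ x.2 = (k : ℝ)} with hS
  set ζ : ℝ × ℝ → ℂ := fun x => (x.2 : ℂ) - x.1 * Complex.I with hζdef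
  set f : ℂ → ℂ := fun z => 1 - Complex.exp (-(2*(π:ℂ)) * z) with hfdef
  have hζ0 : ∀ x ∈ S, ζ x ≠ 0 := by
    intro x hx h0
    apply hx
    have h1 : x.2 = 0 ∧ -x.1 = 0 := by
      constructor
      · have := congrArg Complex.re h0; simpa [hζdef] using this
      · have := congrArg Complex.im h0; simpa [hζdef] using this
    exact ⟨0, 0, by push_cast; constructor <;> linarith [h1.1, h1.2]⟩
  have hζ : Filter.Tendsto ζ (nhdsWithin 0 S) (nhdsWithin (0:ℂ) {(0:ℂ)}ᶜ) := by
    rw [tendsto_nhdsWithin_iff]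
    constructor
    · have hc : Continuous ζ := by fun_prop
      have := (hc.tendsto 0).mono_left (nhdsWithin_le_nhds (s := S))
      simpa [hζdef] using this
    · filter_upwards [eventually_mem_nhdsWithin] with x hx
      exact hζ0 x hx
  have hder : HasDerivAt f (2*(π:ℂ)) 0 := by
    have h1 : HasDerivAt (fun z : ℂ => (-(2*(π:ℂ))) * z) (-(2*(π:ℂ))) 0 := by
      simpa using (hasDerivAt_id (0:ℂ)).const_mul (-(2*(π:ℂ)))
    have h2 := h1.cexp
    have h3 := (hasDerivAt_const (0:ℂ) (1:ℂ)).sub h2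
    have h4 : HasDerivAt f (0 - Complex.exp (-(2*(π:ℂ)) * 0) * (-(2*(π:ℂ)))) 0 := h3
    simpa using h4
  have hslope := hasDerivAt_iff_tendsto_slope.mp hder
  have hcomp : Filter.Tendsto (fun x : ℝ × ℝ => slope f 0 (ζ x)) (nhdsWithin 0 S)
      (nhds (2*(π:ℂ))) := hslope.comp hζ
  have habs : Filter.Tendsto (fun x : ℝ × ℝ => ‖slope f 0 (ζ x)‖) (nhdsWithin 0 S)
      (nhds (2*π)) := by
    have h := (continuous_norm.tendsto (2*(π:ℂ))).comp hcomp
    have hv : ‖2*(π:ℂ)‖ = 2*π := by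
      rw [show (2*(π:ℂ)) = ((2*π : ℝ) : ℂ) by push_cast; ring, Complex.norm_real, Real.norm_eq_abs]
      exact abs_of_pos (by positivity)
    rw [hv] at h
    exact h
  have hlog : Filter.Tendsto (fun x : ℝ × ℝ => -4 * Real.log (‖slope f 0 (ζ x)‖))
      (nhdsWithin 0 S) (nhds (-4 * Real.log (2*π))) :=
    ((Real.continuousAt_log (by positivity)).tendsto.comp habs).const_mul (-4)
  have hne : ∀ᶠ x : ℝ × ℝ in nhdsWithin 0 S, slope f 0 (ζ x) ≠ 0 :=
    hcomp.eventually_ne (by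
      simp only [ne_eq, mul_eq_zero, not_or]
      exact ⟨two_ne_zero, Complex.ofReal_ne_zero.mpr Real.pi_ne_zero⟩)
  have hkey : ∀ᶠ x : ℝ × ℝ in nhdsWithin 0 S,
      -4 * Real.log (‖slope f 0 (ζ x)‖)
        = 4 * Real.log (Real.sqrt (x.1 ^ 2 + x.2 ^ 2)) -
          2 * Real.log (1 + Real.exp (-4 * π * x.2) -
            2 * Real.exp (-2 * π * x.2) * Real.cos (2 * π * x.1)) := by
    filter_upwards [hne, eventually_mem_nhdsWithin] with x h1 h2
    have hz : ζ x ≠ 0 := hζ0 x h2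
    have hf0 : f 0 = 0 := by simp [hfdef]
    have hsl : slope f 0 (ζ x) = f (ζ x) / ζ x := by
      rw [slope_def_field, hf0, sub_zero, sub_zero]
    have hfz : f (ζ x) ≠ 0 := by
      intro h
      apply h1
      rw [hsl, h, zero_div]
    have habsz : ‖ζ x‖ = Real.sqrt (x.1 ^ 2 + x.2 ^ 2) := by
      rw [Complex.norm_def, Complex.normSq_apply]
      have hre : (ζ x).re = x.2 := by simp [hζdef]
      have him : (ζ x).im = -x.1 := by simp [hζdef]
      rw [hre, him]
      congr 1; ring
    have hD : 1 + Real.exp (-4 * π * x.2) - 2 * Real.exp (-2 * π * x.2) * Real.cos (2 * π * x.1)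
        = ‖f (ζ x)‖ ^ 2 := (abs_sq_eq x).symm
    rw [hsl, norm_div, Real.log_div (by
        simpa using (norm_ne_zero_iff.mpr hfz)) (by simpa using (norm_ne_zero_iff.mpr hz)),
      habsz, hD, Real.log_pow]
    push_cast
    ring
  exact Filter.Tendsto.congr' hkey hlog


/-- As `x → 0` within `ℝ² \ ℤ²`, `λ(x) + 4 log |x|` converges to
`-4 log(2π) + 2π/3 - 8 Σ_{n≥1} log(1 - e^{-2πn})`, the regular value `A_P` of the Green
function of the flat unit torus at its singularity. -/
theorem lam_expansion_at_singularity :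
    Filter.Tendsto (fun x : ℝ × ℝ => lam x + 4 * Real.log (Real.sqrt (x.1 ^ 2 + x.2 ^ 2)))
      (nhdsWithin (0 : ℝ × ℝ) {x : ℝ × ℝ | ¬ ∃ m k : ℤ, x.1 = (m : ℝ) ∧ x.2 = (k : ℝ)})
      (nhds (-4 * Real.log (2 * π) + 2 * π / 3 -
        8 * ∑' n : ℕ, Real.log (1 - Real.exp (-2 * π * (n + 1))))) := by
  set S : Set (ℝ × ℝ) := {x : ℝ × ℝ | ¬ ∃ m k : ℤ, x.1 = (m : ℝ) ∧ x.2 = (k : ℝ)} with hSdef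
  have hA : Filter.Tendsto (fun x : ℝ × ℝ => 4 * π * (x.2 ^ 2 - x.2 + 1 / 6))
      (nhdsWithin 0 S) (nhds (2 * π / 3)) := by
    have hc : Continuous (fun x : ℝ × ℝ => 4 * π * (x.2 ^ 2 - x.2 + 1 / 6)) := by fun_prop
    have h := (hc.tendsto 0).mono_left (nhdsWithin_le_nhds (s := S))
    have h0 : 4 * π * ((0:ℝ×ℝ).2 ^ 2 - (0:ℝ×ℝ).2 + 1 / 6) = 2 * π / 3 := by
      norm_num
      ring
    rw [h0] at h; exact h
  have h1 := (tsum_part_tendsto (-1) (Or.inr rfl)).mono_left (nhdsWithin_le_nhds (s := S))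
  have h2 := (tsum_part_tendsto 1 (Or.inl rfl)).mono_left (nhdsWithin_le_nhds (s := S))
  have e1 : (fun x : ℝ × ℝ => ∑' n : ℕ, Real.log (1 +
        Real.exp (-4 * π * (n + 1) + (-1:ℝ) * (4 * π * x.2)) -
        2 * Real.exp (-2 * π * (n + 1) + (-1:ℝ) * (2 * π * x.2)) * Real.cos (2 * π * x.1)))
      = fun x : ℝ × ℝ => ∑' n : ℕ, Real.log (1 + Real.exp (-4 * π * (n + 1) - 4 * π * x.2) -
        2 * Real.exp (-2 * π * (n + 1) - 2 * π * x.2) * Real.cos (2 * π * x.1)) := by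
    funext x
    exact tsum_congr fun n => by
      rw [show -4 * π * ((n:ℝ) + 1) + (-1:ℝ) * (4 * π * x.2)
            = -4 * π * ((n:ℝ) + 1) - 4 * π * x.2 by ring,
        show -2 * π * ((n:ℝ) + 1) + (-1:ℝ) * (2 * π * x.2)
            = -2 * π * ((n:ℝ) + 1) - 2 * π * x.2 by ring]
  have e2 : (fun x : ℝ × ℝ => ∑' n : ℕ, Real.log (1 +
        Real.exp (-4 * π * (n + 1) + (1:ℝ) * (4 * π * x.2)) -
        2 * Real.exp (-2 * π * (n + 1) + (1:ℝ) * (2 * π * x.2)) * Real.cos (2 * π * x.1)))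
      = fun x : ℝ × ℝ => ∑' n : ℕ, Real.log (1 + Real.exp (-4 * π * (n + 1) + 4 * π * x.2) -
        2 * Real.exp (-2 * π * (n + 1) + 2 * π * x.2) * Real.cos (2 * π * x.1)) := by
    funext x
    exact tsum_congr fun n => by
      rw [show -4 * π * ((n:ℝ) + 1) + (1:ℝ) * (4 * π * x.2)
            = -4 * π * ((n:ℝ) + 1) + 4 * π * x.2 by ring,
        show -2 * π * ((n:ℝ) + 1) + (1:ℝ) * (2 * π * x.2)
            = -2 * π * ((n:ℝ) + 1) + 2 * π * x.2 by ring]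
  rw [e1] at h1
  rw [e2] at h2
  have hB := middle_tendsto
  have hsum := ((hA.sub (h1.const_mul 2)).sub (h2.const_mul 2)).add hB
  have hval : -4 * Real.log (2 * π) + 2 * π / 3 -
        8 * ∑' n : ℕ, Real.log (1 - Real.exp (-2 * π * (n + 1)))
      = 2 * π / 3 - 2 * (2 * ∑' n : ℕ, Real.log (1 - Real.exp (-2 * π * (n + 1)))) -
          2 * (2 * ∑' n : ℕ, Real.log (1 - Real.exp (-2 * π * (n + 1)))) + -4 * Real.log (2 * π) := by
    ring
  rw [hval]
  refine hsum.congr fun x => ?_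
  simp only [lam]
  ring
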